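/- Let (Ω, F, (F_j)_{j≥0}, P) be a filtered probability space and let N ≥ 1 be an integer. For each i = 1, …, N let (M^{(i)}_j)_{j≥1} be a square-integrable process adapted to the filtration, and suppose there are real constants θ_{i,l} (1 ≤ i, l ≤ N) such that E[ | E[ M^{(i)}_j · M^{(l)}_j | F_{j−1} ] − θ_{i,l} | ] → 0 as j → ∞ for all i, l. Let p₁, …, p_N < 1/2 and K > 0 be real constants, and for each n ≥ 1 let b^{(i)}_{j,n} (1 ≤ j ≤ n, 1 ≤ i ≤ N) be real numbers with |b^{(i)}_{j,n}| ≤ K·(n/(j+1))^{p_i}. Assume moreover that for all i, l the limit B_{i,l} := lim_{n→∞} (1/n)·∑_{j=1}^{n} b^{(i)}_{j,n}·b^{(l)}_{j,n} exists. Then the conditional variance sums converge in L¹: E[ | (1/n)·∑_{j=1}^{n} E[ ( ∑_{i=1}^{N} b^{(i)}_{j,n}·M^{(i)}_j )² | F_{j−1} ] − ∑_{i=1}^{N} ∑_{l=1}^{N} B_{i,l}·θ_{i,l} | ] → 0 as n → ∞. -/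

import Mathlib

open MeasureTheory Filter

lemma aux_sum_rpow_le {q : ℝ} (hq0 : 0 ≤ q) (hq1 : q < 1) (n : ℕ) (hn : 1 ≤ n) :
    ∑ j ∈ Finset.Icc 1 n, ((n : ℝ) / ((j : ℝ) + 1)) ^ q ≤ 2 / (1 - q) * n := by
  have hn0 : (0:ℝ) < n := by exact_mod_cast hn
  have hq' : (0:ℝ) < 1 - q := by linarith
  have hn1 : (1:ℝ) ≤ n := by exact_mod_cast hn
  have h1 : ∑ j ∈ Finset.Icc 1 n, ((n : ℝ) / ((j : ℝ) + 1)) ^ q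
      = (n:ℝ)^q * ∑ j ∈ Finset.Icc 1 n, ((j : ℝ) + 1) ^ (-q) := by
    rw [Finset.mul_sum]
    refine Finset.sum_congr rfl fun j hj => ?_
    rw [Real.div_rpow hn0.le (by positivity), Real.rpow_neg (by positivity), div_eq_mul_inv]
  have h2 : ∑ j ∈ Finset.Icc 1 n, ((j : ℝ) + 1) ^ (-q)
      ≤ ((n:ℝ)+1) ^ (1-q) / (1-q) := by
    have hanti : AntitoneOn (fun t : ℝ => (t + 1) ^ (-q)) (Set.Icc (0:ℝ) (0 + n)) := by
      intro x hx y hy hxy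
      exact Real.rpow_le_rpow_of_nonpos (by linarith [hx.1]) (by linarith)
        (by linarith)
    have hle := hanti.sum_le_integral
    have hIcc : ∑ j ∈ Finset.Icc 1 n, ((j : ℝ) + 1) ^ (-q)
        = ∑ i ∈ Finset.range n, (((0:ℝ) + ((i + 1 : ℕ) : ℝ)) + 1) ^ (-q) := by
      rw [← Finset.Ico_add_one_right_eq_Icc, Finset.sum_Ico_eq_sum_range]
      norm_num
      refine Finset.sum_congr rfl fun i _ => ?_
      push_cast
      ring_nf
    rw [hIcc]
    refine le_trans hle ?_
    have hint : ∫ x in (0:ℝ)..(0 + n), (x + 1) ^ (-q)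
        = ∫ x in (1:ℝ)..((n:ℝ)+1), x ^ (-q) := by
      rw [zero_add, show (∫ x in (0:ℝ)..(n:ℝ), (x + 1) ^ (-q))
            = ∫ x in (0:ℝ)..(n:ℝ), (fun y : ℝ => y ^ (-q)) (x + 1) from rfl,
        intervalIntegral.integral_comp_add_right (fun y : ℝ => y ^ (-q)) 1]
      norm_num
    rw [hint, integral_rpow (Or.inl (by linarith)), Real.one_rpow]
    have he : (-q) + 1 = 1 - q := by ring
    rw [he]
    have h0 : (0:ℝ) < ((n:ℝ)+1) ^ (1-q) := by positivity
    gcongr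
    linarith
  calc ∑ j ∈ Finset.Icc 1 n, ((n : ℝ) / ((j : ℝ) + 1)) ^ q
      ≤ (n:ℝ)^q * (((n:ℝ)+1) ^ (1-q) / (1-q)) := by
        rw [h1]; exact mul_le_mul_of_nonneg_left h2 (by positivity)
    _ = (n:ℝ)^q * ((n:ℝ)+1) ^ (1-q) / (1-q) := by ring
    _ ≤ (n:ℝ)^q * (2*(n:ℝ)) ^ (1-q) / (1-q) := by
        have h3 : ((n:ℝ)+1) ^ (1-q) ≤ (2*(n:ℝ)) ^ (1-q) :=
          Real.rpow_le_rpow (by positivity) (by linarith) (by linarith)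
        exact (div_le_div_iff_of_pos_right hq').2 (mul_le_mul_of_nonneg_left h3 (Real.rpow_nonneg hn0.le q))
    _ = 2 ^ (1-q) * ((n:ℝ)^q * (n:ℝ)^(1-q)) / (1-q) := by
        rw [Real.mul_rpow (by norm_num) hn0.le]; ring
    _ = 2 ^ (1-q) * (n:ℝ) / (1-q) := by
        rw [← Real.rpow_add hn0]; norm_num
    _ ≤ 2 * (n:ℝ) / (1-q) := by
        refine (div_le_div_iff_of_pos_right hq').2 (mul_le_mul_of_nonneg_right ?_ hn0.le)
        calc (2:ℝ) ^ (1-q) ≤ (2:ℝ) ^ (1:ℝ) :=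
              Real.rpow_le_rpow_of_exponent_le one_le_two (by linarith)
          _ = 2 := Real.rpow_one 2
    _ = 2 / (1 - q) * n := by ring


lemma aux_cesaro {q : ℝ} (hq0 : 0 ≤ q) (hq1 : q < 1) (ε : ℕ → ℝ) (hε0 : ∀ j, 0 ≤ ε j)
    (hε : Tendsto ε atTop (nhds 0)) :
    Tendsto (fun n : ℕ => (1 / (n : ℝ)) * ∑ j ∈ Finset.Icc 1 n,
      ((n : ℝ) / ((j : ℝ) + 1)) ^ q * ε j) atTop (nhds 0) := by
  have hq' : (0:ℝ) < 1 - q := by linarith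
  rw [Metric.tendsto_atTop]
  intro δ hδ
  set δ1 : ℝ := δ * (1 - q) / 4 with hδ1def
  have hδ1 : 0 < δ1 := by positivity
  obtain ⟨m, hm⟩ := (Metric.tendsto_atTop.1 hε) δ1 hδ1
  set S : ℝ := ∑ j ∈ Finset.range (m + 1), ε j with hSdef
  have hS0 : 0 ≤ S := Finset.sum_nonneg fun j _ => hε0 j
  have hto : Tendsto (fun n : ℕ => (n : ℝ) ^ (q - 1) * S) atTop (nhds 0) := by
    have h1 : Tendsto (fun x : ℝ => x ^ (-(1 - q))) atTop (nhds 0) :=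
      tendsto_rpow_neg_atTop hq'
    have h2 : Tendsto (fun n : ℕ => ((n : ℝ)) ^ (q - 1)) atTop (nhds 0) := by
      have := h1.comp (tendsto_natCast_atTop_atTop (R := ℝ))
      simpa [Function.comp_def, neg_sub] using this
    simpa using h2.mul_const S
  obtain ⟨N1, hN1⟩ := (Metric.tendsto_atTop.1 hto) (δ / 2) (by positivity)
  refine ⟨max N1 1, fun n hn => ?_⟩
  have hn1 : 1 ≤ n := le_trans (le_max_right _ _) hn
  have hnN1 : N1 ≤ n := le_trans (le_max_left _ _) hn
  have hn0 : (0:ℝ) < n := by exact_mod_cast hn1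
  have hf0 : 0 ≤ (1 / (n : ℝ)) * ∑ j ∈ Finset.Icc 1 n,
      ((n : ℝ) / ((j : ℝ) + 1)) ^ q * ε j := by
    apply mul_nonneg (by positivity)
    exact Finset.sum_nonneg fun j _ => mul_nonneg (by positivity) (hε0 j)
  have hterm : ∀ j ∈ Finset.Icc 1 n, ((n : ℝ) / ((j : ℝ) + 1)) ^ q * ε j
      ≤ (n:ℝ)^q * (if j ≤ m then ε j else 0) + ((n : ℝ) / ((j : ℝ) + 1)) ^ q * δ1 := by
    intro j hj
    have hw0 : 0 ≤ ((n : ℝ) / ((j : ℝ) + 1)) ^ q := by positivity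
    by_cases hjm : j ≤ m
    · have hwle : ((n : ℝ) / ((j : ℝ) + 1)) ^ q ≤ (n:ℝ)^q := by
        apply Real.rpow_le_rpow (by positivity) ?_ hq0
        exact div_le_self hn0.le (by linarith [Nat.cast_nonneg (α := ℝ) j])
      have h := mul_le_mul_of_nonneg_right hwle (hε0 j)
      simp only [if_pos hjm]
      nlinarith [mul_nonneg hw0 hδ1.le]
    · have hjm' : m ≤ j := le_of_not_ge hjm
      have hd := hm j hjm'
      rw [Real.dist_eq, sub_zero] at hd
      have hεj : ε j ≤ δ1 := (le_abs_self _).trans hd.le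
      have h := mul_le_mul_of_nonneg_left hεj hw0
      simp only [if_neg hjm, mul_zero, zero_add]
      linarith
  have hsum : ∑ j ∈ Finset.Icc 1 n, ((n : ℝ) / ((j : ℝ) + 1)) ^ q * ε j
      ≤ (n:ℝ)^q * S + (2 / (1-q) * n) * δ1 := by
    calc ∑ j ∈ Finset.Icc 1 n, ((n : ℝ) / ((j : ℝ) + 1)) ^ q * ε j
        ≤ ∑ j ∈ Finset.Icc 1 n,
            ((n:ℝ)^q * (if j ≤ m then ε j else 0) + ((n : ℝ) / ((j : ℝ) + 1)) ^ q * δ1) :=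
          Finset.sum_le_sum hterm
      _ = (n:ℝ)^q * (∑ j ∈ Finset.Icc 1 n, if j ≤ m then ε j else 0)
          + (∑ j ∈ Finset.Icc 1 n, ((n : ℝ) / ((j : ℝ) + 1)) ^ q) * δ1 := by
          rw [Finset.sum_add_distrib, Finset.mul_sum, Finset.sum_mul]
      _ ≤ (n:ℝ)^q * S + (2 / (1-q) * n) * δ1 := by
          have hA : (∑ j ∈ Finset.Icc 1 n, if j ≤ m then ε j else 0) ≤ S := by
            rw [← Finset.sum_filter]
            apply Finset.sum_le_sum_of_subset_of_nonneg
            · intro j hj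
              rw [Finset.mem_filter] at hj
              exact Finset.mem_range.2 (Nat.lt_succ_of_le hj.2)
            · exact fun j _ _ => hε0 j
          have hB := aux_sum_rpow_le hq0 hq1 n hn1
          have := mul_le_mul_of_nonneg_left hA (Real.rpow_nonneg hn0.le q)
          have := mul_le_mul_of_nonneg_right hB hδ1.le
          linarith
  rw [Real.dist_eq, sub_zero, abs_of_nonneg hf0]
  have hcalc : (1 / (n : ℝ)) * ((n:ℝ)^q * S + (2 / (1-q) * n) * δ1)
      = (n:ℝ)^(q-1) * S + δ/2 := by
    have h1 : (n:ℝ)^(q-1) = (n:ℝ)^q / n := by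
      rw [Real.rpow_sub hn0, Real.rpow_one]
    rw [h1, hδ1def]
    field_simp
    ring
  have hfinal : (1 / (n : ℝ)) * ∑ j ∈ Finset.Icc 1 n,
      ((n : ℝ) / ((j : ℝ) + 1)) ^ q * ε j ≤ (n:ℝ)^(q-1) * S + δ/2 := by
    rw [← hcalc]
    exact mul_le_mul_of_nonneg_left hsum (by positivity)
  have hd := hN1 n hnN1
  rw [Real.dist_eq, sub_zero] at hd
  have : (n:ℝ)^(q-1) * S < δ/2 := (le_abs_self _).trans_lt hd
  linarith


lemma aux_cesaro' {q C : ℝ} (hq0 : 0 ≤ q) (hq1 : q < 1) (hC : 0 ≤ C)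
    (a : ℕ → ℕ → ℝ) (ha : ∀ n j : ℕ, 1 ≤ j → j ≤ n →
      |a n j| ≤ C * ((n : ℝ) / ((j : ℝ) + 1)) ^ q)
    (ε : ℕ → ℝ) (hε0 : ∀ j, 0 ≤ ε j) (hε : Tendsto ε atTop (nhds 0)) :
    Tendsto (fun n : ℕ => (1 / (n : ℝ)) * ∑ j ∈ Finset.Icc 1 n, |a n j| * ε j)
      atTop (nhds 0) := by
  have h := (aux_cesaro hq0 hq1 ε hε0 hε).const_mul C
  rw [mul_zero] at h
  refine squeeze_zero (fun n => ?_) (fun n => ?_) h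
  · exact mul_nonneg (by positivity)
      (Finset.sum_nonneg fun j _ => mul_nonneg (abs_nonneg _) (hε0 j))
  · have : C * ((1 / (n:ℝ)) * ∑ j ∈ Finset.Icc 1 n, ((n : ℝ) / ((j : ℝ) + 1)) ^ q * ε j)
        = (1 / (n:ℝ)) * ∑ j ∈ Finset.Icc 1 n, C * (((n : ℝ) / ((j : ℝ) + 1)) ^ q * ε j) := by
      rw [Finset.mul_sum, Finset.mul_sum, Finset.mul_sum]
      exact Finset.sum_congr rfl fun j _ => by ring
    rw [this]
    refine mul_le_mul_of_nonneg_left (Finset.sum_le_sum fun j hj => ?_) (by positivity)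
    rw [Finset.mem_Icc] at hj
    rw [← mul_assoc]
    exact mul_le_mul_of_nonneg_right (ha n j hj.1 hj.2) (hε0 j)

lemma aux_integral_abs_sum_le {Ω : Type*} {m0 : MeasurableSpace Ω} (μ : Measure Ω)
    {ι : Type*} (s : Finset ι) (f : ι → Ω → ℝ) (hf : ∀ i ∈ s, Integrable (f i) μ) :
    ∫ ω, |∑ i ∈ s, f i ω| ∂μ ≤ ∑ i ∈ s, ∫ ω, |f i ω| ∂μ := by
  calc ∫ ω, |∑ i ∈ s, f i ω| ∂μ ≤ ∫ ω, ∑ i ∈ s, |f i ω| ∂μ := by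
        refine integral_mono ((integrable_finset_sum s hf).abs) ?_
          (fun ω => Finset.abs_sum_le_sum_abs _ _)
        exact integrable_finset_sum s (fun i hi => (hf i hi).abs)
    _ = ∑ i ∈ s, ∫ ω, |f i ω| ∂μ := integral_finset_sum s (fun i hi => (hf i hi).abs)

/-- Conditional variance condition: if the conditional products
`E[M⁽ⁱ⁾_j M⁽ˡ⁾_j | F_{j−1}]` converge in `L¹` to constants `θ_{i,l}`, the coefficients
satisfy `|b⁽ⁱ⁾_{j,n}| ≤ K (n/(j+1))^{p_i}` with `p_i < 1/2`, and the Cesàro averages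
`(1/n) ∑_j b⁽ⁱ⁾_{j,n} b⁽ˡ⁾_{j,n}` converge to `B_{i,l}`, then
`(1/n) ∑_{j=1}^n E[(∑_i b⁽ⁱ⁾_{j,n} M⁽ⁱ⁾_j)² | F_{j−1}]` converges in `L¹` to
`∑_i ∑_l B_{i,l} θ_{i,l}`. -/
theorem conditional_variance_condition
    {Ω : Type*} {m0 : MeasurableSpace Ω} (μ : Measure Ω) [IsProbabilityMeasure μ]
    (ℱ : Filtration ℕ m0)
    (N : ℕ) (hN : 1 ≤ N)
    (M : Fin N → ℕ → Ω → ℝ)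
    (hadapt : ∀ i, Adapted ℱ (M i))
    (hL2 : ∀ i j, MemLp (M i j) 2 μ)
    (θ : Fin N → Fin N → ℝ)
    (hθ : ∀ i l, Tendsto
      (fun j : ℕ =>
        ∫ ω, |(μ[(fun ω => M i j ω * M l j ω) | ℱ (j - 1)]) ω - θ i l| ∂μ)
      atTop (nhds 0))
    (p : Fin N → ℝ) (hp : ∀ i, p i < 1 / 2) (K : ℝ) (hK : 0 < K)
    (b : Fin N → ℕ → ℕ → ℝ)
    (hb : ∀ i, ∀ n j : ℕ, 1 ≤ j → j ≤ n →
      |b i n j| ≤ K * ((n : ℝ) / ((j : ℝ) + 1)) ^ (p i))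
    (B : Fin N → Fin N → ℝ)
    (hB : ∀ i l, Tendsto
      (fun n : ℕ => (1 / (n : ℝ)) * ∑ j ∈ Finset.Icc 1 n, b i n j * b l n j)
      atTop (nhds (B i l))) :
    Tendsto
      (fun n : ℕ =>
        ∫ ω, |(1 / (n : ℝ)) * ∑ j ∈ Finset.Icc 1 n,
            (μ[(fun ω => (∑ i, b i n j * M i j ω) ^ 2) | ℱ (j - 1)]) ω
          - ∑ i, ∑ l, B i l * θ i l| ∂μ)
      atTop (nhds 0) := by
  classical
  -- abbreviations
  set g : Fin N → Fin N → ℕ → Ω → ℝ :=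
    fun i l j => μ[(fun ω => M i j ω * M l j ω) | ℱ (j - 1)] with hgdef
  set e : Fin N → Fin N → ℕ → ℝ :=
    fun i l j => ∫ ω, |g i l j ω - θ i l| ∂μ with hedef
  -- integrability of products
  have hMint : ∀ (i l : Fin N) (j : ℕ), Integrable (fun ω => M i j ω * M l j ω) μ := by
    intro i l j
    have h := (hL2 l j).smul (hL2 i j) (p := 2) (q := 2) (r := 1)
      (hpqr := ⟨by rw [inv_one]; exact ENNReal.inv_two_add_inv_two⟩)
    rw [memLp_one_iff_integrable] at h
    exact h
  have hgint : ∀ i l j, Integrable (g i l j) μ := fun i l j => integrable_condExp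
  have hDint : ∀ i l j, Integrable (fun ω => g i l j ω - θ i l) μ :=
    fun i l j => (hgint i l j).sub (integrable_const _)
  have he0 : ∀ i l j, 0 ≤ e i l j := fun i l j => integral_nonneg fun ω => abs_nonneg _
  -- conditional expectation identity
  have hCE : ∀ (n j : ℕ),
      (μ[(fun ω => (∑ i, b i n j * M i j ω) ^ 2) | ℱ (j - 1)])
        =ᵐ[μ] (fun ω => ∑ i, ∑ l, b i n j * b l n j * g i l j ω) := by
    intro n j
    have hfun : (fun ω => (∑ i, b i n j * M i j ω) ^ 2)
        = ∑ P : Fin N × Fin N,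
            (b P.1 n j * b P.2 n j) • (fun ω => M P.1 j ω * M P.2 j ω) := by
      funext ω
      rw [Finset.sum_apply]
      simp only [Pi.smul_apply, smul_eq_mul]
      rw [Fintype.sum_prod_type, sq, Finset.sum_mul_sum]
      exact Finset.sum_congr rfl fun i _ => Finset.sum_congr rfl fun l _ => by ring
    have h1 : (μ[(fun ω => (∑ i, b i n j * M i j ω) ^ 2) | ℱ (j - 1)])
        =ᵐ[μ] ∑ P : Fin N × Fin N,
          μ[(b P.1 n j * b P.2 n j) • (fun ω => M P.1 j ω * M P.2 j ω) | ℱ (j - 1)] := by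
      rw [hfun]
      exact condExp_finset_sum (fun P _ => (hMint P.1 P.2 j).smul (b P.1 n j * b P.2 n j)) _
    have h2 : ∀ᵐ ω ∂μ, ∀ P : Fin N × Fin N,
        (μ[(b P.1 n j * b P.2 n j) • (fun ω => M P.1 j ω * M P.2 j ω) | ℱ (j - 1)]) ω
        = ((b P.1 n j * b P.2 n j) • μ[(fun ω => M P.1 j ω * M P.2 j ω) | ℱ (j - 1)]) ω :=
      ae_all_iff.2 fun P => condExp_smul (b P.1 n j * b P.2 n j) _ _
    filter_upwards [h1, h2] with ω hω1 hω2
    rw [hω1, Finset.sum_apply, Finset.sum_congr rfl fun P hP => hω2 P]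
    rw [Fintype.sum_prod_type]
    exact Finset.sum_congr rfl fun i _ => Finset.sum_congr rfl fun l _ => by
      simp [Pi.smul_apply, smul_eq_mul, hgdef]
  -- integrability of the remainder terms
  have hsumint : ∀ (n : ℕ) (i l : Fin N), Integrable (fun ω =>
      (1 / (n : ℝ)) * ∑ j ∈ Finset.Icc 1 n,
        b i n j * b l n j * (g i l j ω - θ i l)) μ := by
    intro n i l
    refine Integrable.const_mul ?_ _
    exact integrable_finset_sum _ fun j _ => (hDint i l j).const_mul _
  have hψint : ∀ (n : ℕ) (i l : Fin N), Integrable (fun ω =>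
      ((1 / (n : ℝ)) * (∑ j ∈ Finset.Icc 1 n, b i n j * b l n j) - B i l) * θ i l
      + (1 / (n : ℝ)) * ∑ j ∈ Finset.Icc 1 n,
          b i n j * b l n j * (g i l j ω - θ i l)) μ :=
    fun n i l => (integrable_const _).add (hsumint n i l)
  -- a.e. rewriting of the integrand
  have hae : ∀ n : ℕ,
      (fun ω => (1 / (n : ℝ)) * ∑ j ∈ Finset.Icc 1 n,
          (μ[(fun ω => (∑ i, b i n j * M i j ω) ^ 2) | ℱ (j - 1)]) ω
        - ∑ i, ∑ l, B i l * θ i l)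
      =ᵐ[μ] (fun ω => ∑ i, ∑ l,
          (((1 / (n : ℝ)) * (∑ j ∈ Finset.Icc 1 n, b i n j * b l n j) - B i l) * θ i l
          + (1 / (n : ℝ)) * ∑ j ∈ Finset.Icc 1 n,
              b i n j * b l n j * (g i l j ω - θ i l))) := by
    intro n
    have h1 : ∀ᵐ ω ∂μ, ∀ j ∈ Finset.Icc 1 n,
        (μ[(fun ω => (∑ i, b i n j * M i j ω) ^ 2) | ℱ (j - 1)]) ω
        = ∑ i, ∑ l, b i n j * b l n j * g i l j ω :=
      (ae_ball_iff (Finset.Icc 1 n).countable_toSet).2 fun j _ => hCE n j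
    filter_upwards [h1] with ω hω
    rw [Finset.sum_congr rfl hω]
    have swap : ∑ j ∈ Finset.Icc 1 n, ∑ i, ∑ l, b i n j * b l n j * g i l j ω
        = ∑ i, ∑ l, ∑ j ∈ Finset.Icc 1 n, b i n j * b l n j * g i l j ω := by
      rw [Finset.sum_comm]
      exact Finset.sum_congr rfl fun i _ => Finset.sum_comm
    rw [swap]
    have hterm : ∀ i l : Fin N,
        ((1 / (n : ℝ)) * (∑ j ∈ Finset.Icc 1 n, b i n j * b l n j) - B i l) * θ i l
        + (1 / (n : ℝ)) * ∑ j ∈ Finset.Icc 1 n, b i n j * b l n j * (g i l j ω - θ i l)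
        = (1 / (n : ℝ)) * ∑ j ∈ Finset.Icc 1 n, b i n j * b l n j * g i l j ω
          - B i l * θ i l := by
      intro i l
      have h1 : ∑ j ∈ Finset.Icc 1 n, b i n j * b l n j * (g i l j ω - θ i l)
          = ∑ j ∈ Finset.Icc 1 n, b i n j * b l n j * g i l j ω
            - (∑ j ∈ Finset.Icc 1 n, b i n j * b l n j) * θ i l := by
        rw [Finset.sum_mul, ← Finset.sum_sub_distrib]
        exact Finset.sum_congr rfl fun j _ => by ring
      rw [h1]; ring
    simp only [hterm]
    simp only [Finset.sum_sub_distrib, Finset.mul_sum]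
  -- key integral inequality
  have key : ∀ n : ℕ,
      (∫ ω, |(1 / (n : ℝ)) * ∑ j ∈ Finset.Icc 1 n,
          (μ[(fun ω => (∑ i, b i n j * M i j ω) ^ 2) | ℱ (j - 1)]) ω
        - ∑ i, ∑ l, B i l * θ i l| ∂μ)
      ≤ ∑ i, ∑ l,
          (|(1 / (n : ℝ)) * (∑ j ∈ Finset.Icc 1 n, b i n j * b l n j) - B i l| * |θ i l|
          + (1 / (n : ℝ)) * ∑ j ∈ Finset.Icc 1 n, |b i n j * b l n j| * e i l j) := by
    intro n
    have habs : (fun ω => |(1 / (n : ℝ)) * ∑ j ∈ Finset.Icc 1 n,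
          (μ[(fun ω => (∑ i, b i n j * M i j ω) ^ 2) | ℱ (j - 1)]) ω
        - ∑ i, ∑ l, B i l * θ i l|)
        =ᵐ[μ] (fun ω => |∑ i, ∑ l,
          (((1 / (n : ℝ)) * (∑ j ∈ Finset.Icc 1 n, b i n j * b l n j) - B i l) * θ i l
          + (1 / (n : ℝ)) * ∑ j ∈ Finset.Icc 1 n,
              b i n j * b l n j * (g i l j ω - θ i l))|) :=
      (hae n).mono fun ω hω => congrArg abs hω
    rw [integral_congr_ae habs]
    have step := aux_integral_abs_sum_le μ Finset.univ
      (fun (i : Fin N) ω => ∑ l,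
        (((1 / (n : ℝ)) * (∑ j ∈ Finset.Icc 1 n, b i n j * b l n j) - B i l) * θ i l
          + (1 / (n : ℝ)) * ∑ j ∈ Finset.Icc 1 n,
              b i n j * b l n j * (g i l j ω - θ i l)))
      (fun i _ => integrable_finset_sum _ fun l _ => hψint n i l)
    refine le_trans step (Finset.sum_le_sum fun i _ => ?_)
    have step2 := aux_integral_abs_sum_le μ Finset.univ
      (fun (l : Fin N) ω =>
        (((1 / (n : ℝ)) * (∑ j ∈ Finset.Icc 1 n, b i n j * b l n j) - B i l) * θ i l
          + (1 / (n : ℝ)) * ∑ j ∈ Finset.Icc 1 n,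
              b i n j * b l n j * (g i l j ω - θ i l)))
      (fun l _ => hψint n i l)
    refine le_trans step2 (Finset.sum_le_sum fun l _ => ?_)
    -- single (i, l) term
    set c : ℝ := ((1 / (n : ℝ)) * (∑ j ∈ Finset.Icc 1 n, b i n j * b l n j) - B i l) * θ i l
      with hcdef
    have habs : ∫ ω, |c + (1 / (n : ℝ)) * ∑ j ∈ Finset.Icc 1 n,
        b i n j * b l n j * (g i l j ω - θ i l)| ∂μ
        ≤ |c| + ∫ ω, |(1 / (n : ℝ)) * ∑ j ∈ Finset.Icc 1 n,
            b i n j * b l n j * (g i l j ω - θ i l)| ∂μ := by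
      calc ∫ ω, |c + (1 / (n : ℝ)) * ∑ j ∈ Finset.Icc 1 n,
              b i n j * b l n j * (g i l j ω - θ i l)| ∂μ
          ≤ ∫ ω, (|c| + |(1 / (n : ℝ)) * ∑ j ∈ Finset.Icc 1 n,
              b i n j * b l n j * (g i l j ω - θ i l)|) ∂μ := by
            refine integral_mono ((hψint n i l).abs) ?_ (fun ω => abs_add_le _ _)
            exact (integrable_const _).add (hsumint n i l).abs
        _ = |c| + ∫ ω, |(1 / (n : ℝ)) * ∑ j ∈ Finset.Icc 1 n,
              b i n j * b l n j * (g i l j ω - θ i l)| ∂μ := by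
            rw [integral_add (integrable_const _) (hsumint n i l).abs, integral_const]
            simp
    refine le_trans habs ?_
    have hc : |c| = |(1 / (n : ℝ)) * (∑ j ∈ Finset.Icc 1 n, b i n j * b l n j) - B i l|
        * |θ i l| := abs_mul _ _
    rw [hc]
    refine add_le_add_right ?_ _
    have step3 : ∫ ω, |(1 / (n : ℝ)) * ∑ j ∈ Finset.Icc 1 n,
        b i n j * b l n j * (g i l j ω - θ i l)| ∂μ
        = (1 / (n : ℝ)) * ∫ ω, |∑ j ∈ Finset.Icc 1 n,
            b i n j * b l n j * (g i l j ω - θ i l)| ∂μ := by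
      have : ∀ ω, |(1 / (n : ℝ)) * ∑ j ∈ Finset.Icc 1 n,
          b i n j * b l n j * (g i l j ω - θ i l)|
          = (1 / (n : ℝ)) * |∑ j ∈ Finset.Icc 1 n,
              b i n j * b l n j * (g i l j ω - θ i l)| := fun ω => by
        rw [abs_mul, abs_of_nonneg (by positivity : (0:ℝ) ≤ 1 / (n:ℝ))]
      simp only [this]
      exact integral_const_mul _ _
    rw [step3]
    refine mul_le_mul_of_nonneg_left ?_ (by positivity)
    have step4 := aux_integral_abs_sum_le μ (Finset.Icc 1 n)
      (fun j ω => b i n j * b l n j * (g i l j ω - θ i l))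
      (fun j _ => (hDint i l j).const_mul _)
    refine le_trans step4 (le_of_eq (Finset.sum_congr rfl fun j _ => ?_))
    have : ∀ ω, |b i n j * b l n j * (g i l j ω - θ i l)|
        = |b i n j * b l n j| * |g i l j ω - θ i l| := fun ω => abs_mul _ _
    simp only [this]
    rw [integral_const_mul]
  -- coefficient bounds with nonnegative exponents
  have hb' : ∀ (i : Fin N) (n j : ℕ), 1 ≤ j → j ≤ n →
      |b i n j| ≤ (K * 2 ^ (max (p i) 0 - p i))
        * ((n : ℝ) / ((j : ℝ) + 1)) ^ (max (p i) 0) := by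
    intro i n j hj hjn
    have hj1 : (1:ℝ) ≤ j := by exact_mod_cast hj
    have hjn1 : (j:ℝ) ≤ n := by exact_mod_cast hjn
    have hx : (1:ℝ)/2 ≤ (n : ℝ) / ((j : ℝ) + 1) := by
      rw [div_le_div_iff₀ (by norm_num) (by positivity)]
      linarith
    have hx0 : (0:ℝ) < (n : ℝ) / ((j : ℝ) + 1) := lt_of_lt_of_le (by norm_num) hx
    have h1 : ((n : ℝ) / ((j : ℝ) + 1)) ^ (p i)
        ≤ 2 ^ (max (p i) 0 - p i) * ((n : ℝ) / ((j : ℝ) + 1)) ^ (max (p i) 0) := by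
      have hsplit : ((n : ℝ) / ((j : ℝ) + 1)) ^ (p i)
          = ((n : ℝ) / ((j : ℝ) + 1)) ^ (p i - max (p i) 0)
            * ((n : ℝ) / ((j : ℝ) + 1)) ^ (max (p i) 0) := by
        rw [← Real.rpow_add hx0]; ring_nf
      rw [hsplit]
      refine mul_le_mul_of_nonneg_right ?_ (Real.rpow_nonneg hx0.le _)
      calc ((n : ℝ) / ((j : ℝ) + 1)) ^ (p i - max (p i) 0)
          ≤ ((1:ℝ)/2) ^ (p i - max (p i) 0) :=
            Real.rpow_le_rpow_of_nonpos (by norm_num) hx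
              (sub_nonpos.2 (le_max_left _ _))
        _ = 2 ^ (max (p i) 0 - p i) := by
            rw [one_div, Real.inv_rpow (by norm_num), ← Real.rpow_neg (by norm_num), neg_sub]
    calc |b i n j| ≤ K * ((n : ℝ) / ((j : ℝ) + 1)) ^ (p i) := hb i n j hj hjn
      _ ≤ K * (2 ^ (max (p i) 0 - p i) * ((n : ℝ) / ((j : ℝ) + 1)) ^ (max (p i) 0)) :=
          mul_le_mul_of_nonneg_left h1 hK.le
      _ = (K * 2 ^ (max (p i) 0 - p i)) * ((n : ℝ) / ((j : ℝ) + 1)) ^ (max (p i) 0) := by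
          ring
  -- final squeeze
  refine squeeze_zero (fun n => integral_nonneg fun ω => abs_nonneg _) key ?_
  have hgoal : Tendsto (fun n : ℕ => ∑ i : Fin N, ∑ l : Fin N,
      (|(1 / (n : ℝ)) * (∑ j ∈ Finset.Icc 1 n, b i n j * b l n j) - B i l| * |θ i l|
      + (1 / (n : ℝ)) * ∑ j ∈ Finset.Icc 1 n, |b i n j * b l n j| * e i l j))
      atTop (nhds (∑ _i : Fin N, ∑ _l : Fin N, (0:ℝ))) := by
    refine tendsto_finset_sum _ fun i _ => tendsto_finset_sum _ fun l _ => ?_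
    have t1 : Tendsto (fun n : ℕ =>
        |(1 / (n : ℝ)) * (∑ j ∈ Finset.Icc 1 n, b i n j * b l n j) - B i l| * |θ i l|)
        atTop (nhds 0) := by
      have h := ((hB i l).sub_const (B i l)).abs
      simp only [sub_self, abs_zero] at h
      simpa using h.mul_const |θ i l|
    have t2 : Tendsto (fun n : ℕ =>
        (1 / (n : ℝ)) * ∑ j ∈ Finset.Icc 1 n, |b i n j * b l n j| * e i l j)
        atTop (nhds 0) := by
      have hq0 : 0 ≤ max (p i) 0 + max (p l) 0 :=
        add_nonneg (le_max_right _ _) (le_max_right _ _)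
      have hq1 : max (p i) 0 + max (p l) 0 < 1 := by
        have h1 : max (p i) 0 < 1/2 := max_lt (hp i) (by norm_num)
        have h2 : max (p l) 0 < 1/2 := max_lt (hp l) (by norm_num)
        linarith
      refine aux_cesaro'
        (C := (K * 2 ^ (max (p i) 0 - p i)) * (K * 2 ^ (max (p l) 0 - p l)))
        hq0 hq1 ?_ (fun n j => b i n j * b l n j) ?_
        (fun j => e i l j) (he0 i l) (hθ i l)
      · positivity
      · intro n j hj hjn
        have hj1 : (1:ℝ) ≤ j := by exact_mod_cast hj
        have hjn1 : (j:ℝ) ≤ n := by exact_mod_cast hjn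
        have hx : (1:ℝ)/2 ≤ (n : ℝ) / ((j : ℝ) + 1) := by
          rw [div_le_div_iff₀ (by norm_num) (by positivity)]
          linarith
        have hx0 : (0:ℝ) < (n : ℝ) / ((j : ℝ) + 1) := lt_of_lt_of_le (by norm_num) hx
        rw [abs_mul, Real.rpow_add hx0]
        calc |b i n j| * |b l n j|
            ≤ ((K * 2 ^ (max (p i) 0 - p i)) * ((n : ℝ) / ((j : ℝ) + 1)) ^ (max (p i) 0))
              * ((K * 2 ^ (max (p l) 0 - p l)) * ((n : ℝ) / ((j : ℝ) + 1)) ^ (max (p l) 0)) :=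
              mul_le_mul (hb' i n j hj hjn) (hb' l n j hj hjn) (abs_nonneg _) (by positivity)
          _ = K * 2 ^ (max (p i) 0 - p i) * (K * 2 ^ (max (p l) 0 - p l))
              * (((n : ℝ) / ((j : ℝ) + 1)) ^ (max (p i) 0)
                * ((n : ℝ) / ((j : ℝ) + 1)) ^ (max (p l) 0)) := by ring
    have := t1.add t2
    simpa using this
  simpa using hgoal
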